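/- Let n ≥ 2 and let (i_1, …, i_{n−1}) be any permutation of (1, …, n−1). Then the product of adjacent transpositions (i_1, i_1+1) · (i_2, i_2+1) ⋯ (i_{n−1}, i_{n−1}+1) in the symmetric group S_n on {1, …, n} is a cycle of length n (equivalently, it is a cyclic permutation whose support is all of {1, …, n}). -/

import Mathlib

/-- The adjacent transposition `(i, i+1)` in the symmetric group on `{1, …, n}`
(0-based: swapping `i - 1` and `i` in `Fin n`), for `1 ≤ i ≤ n - 1`;
the identity otherwise. -/
def adjSwap (n i : ℕ) : Equiv.Perm (Fin n) :=
  if h : 1 ≤ i ∧ i ≤ n - 1 then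
    Equiv.swap (⟨i - 1, by omega⟩ : Fin n) (⟨i, by omega⟩ : Fin n)
  else 1

open Equiv Equiv.Perm in
lemma swap_mul_cycle_insert {α : Type*} [Fintype α] [DecidableEq α] {τ : Equiv.Perm α}
    (hτ : τ.IsCycle) {a b : α} (ha : a ∈ τ.support) (hb : b ∉ τ.support) :
    (Equiv.swap a b * τ).IsCycle ∧ (Equiv.swap a b * τ).support = insert b τ.support := by
  set L := τ.toList a with hL
  have hnodup : L.Nodup := Equiv.Perm.nodup_toList τ a
  have hform : L.formPerm = τ := by
    rw [hL, Equiv.Perm.formPerm_toList, hτ.cycleOf_eq (Equiv.Perm.mem_support.mp ha)]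
  have hne : L ≠ [] := by
    intro h
    rw [Equiv.Perm.toList_eq_nil_iff] at h
    exact h ha
  have hLsupp : L.toFinset = τ.support := by
    rw [← hform]
    exact (List.support_formPerm_of_nodup L hnodup
      (fun x => Equiv.Perm.toList_ne_singleton τ a x)).symm
  have hbL : b ∉ L := by
    rw [← List.mem_toFinset, hLsupp]; exact hb
  have hhead : L = a :: L.tail := by
    obtain ⟨c, t, hct⟩ := List.exists_cons_of_ne_nil hne
    have hpos : 0 < L.length := by rw [hct]; simp
    have h0 : L.get ⟨0, hpos⟩ = a := by simp [hL, Equiv.Perm.toList]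
    have hca : c = a := by
      rw [← h0, List.get_of_eq hct]
      simp
    rw [hct, hca]
    simp
  have hlen : 2 ≤ L.length := by
    rcases Nat.lt_or_ge L.length 2 with h | h
    · exfalso
      interval_cases h' : L.length
      · exact hne (List.length_eq_zero_iff.mp h')
      · obtain ⟨x, hx⟩ := List.length_eq_one_iff.mp h'
        exact Equiv.Perm.toList_ne_singleton τ a x hx
    · exact h
  have key : Equiv.swap a b * τ = (b :: L).formPerm := by
    rw [← hform]
    conv_rhs => rw [hhead]
    rw [List.formPerm_cons_cons, ← hhead, Equiv.swap_comm]
  have hnodup' : (b :: L).Nodup := List.nodup_cons.mpr ⟨hbL, hnodup⟩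
  constructor
  · rw [key]
    exact List.isCycle_formPerm hnodup' (by simp; omega)
  · rw [key, List.support_formPerm_of_nodup _ hnodup' (by
      intro x hx
      rw [hhead] at hx
      simp at hx)]
    simp [hLsupp]

lemma prod_support_le (n k : ℕ) (u : List ℕ) (hu : ∀ i ∈ u, 1 ≤ i ∧ i ≤ k) (hk : k ≤ n - 1) :
    ((u.map (adjSwap n)).prod).support ⊆ Finset.univ.filter (fun x : Fin n => (x : ℕ) ≤ k) := by
  induction u with
  | nil => simp
  | cons i t ih =>
    simp only [List.map_cons, List.prod_cons]
    refine subset_trans (Equiv.Perm.support_mul_le _ _) ?_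
    apply Finset.union_subset
    · obtain ⟨h1, h2⟩ := hu i List.mem_cons_self
      rw [adjSwap, dif_pos ⟨h1, by omega⟩, Equiv.Perm.support_swap (by
        simp [Fin.ext_iff]; omega)]
      intro x hx
      simp at hx
      rcases hx with h | h <;> simp [h] <;> omega
    · exact ih (fun i hi => hu i (List.mem_cons_of_mem _ hi))

lemma map_support_subset {α : Type*} [Fintype α] [DecidableEq α] (U : Equiv.Perm α)
    (S : Finset α) (h : U.support ⊆ S) : S.map U.toEmbedding = S := by
  ext y
  simp only [Finset.mem_map, Equiv.coe_toEmbedding]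
  constructor
  · rintro ⟨x, hx, rfl⟩
    by_cases hfix : U x = x
    · rw [hfix]; exact hx
    · exact h (Equiv.Perm.apply_mem_support.mpr (Equiv.Perm.mem_support.mpr hfix))
  · intro hy
    refine ⟨U⁻¹ y, ?_, by simp⟩
    by_cases hfix : U⁻¹ y = y
    · rw [hfix]; exact hy
    · refine h (Equiv.Perm.mem_support.mpr ?_)
      rw [← Equiv.Perm.mul_apply, mul_inv_cancel, Equiv.Perm.one_apply]
      exact fun hh => hfix hh.symm

lemma main_aux (n : ℕ) (hn : 2 ≤ n) : ∀ k, 1 ≤ k → k ≤ n - 1 → ∀ l : List ℕ,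
    l.Perm ((List.range k).map (· + 1)) →
    ((l.map (adjSwap n)).prod).IsCycle ∧
      ((l.map (adjSwap n)).prod).support
        = Finset.univ.filter (fun x : Fin n => (x : ℕ) ≤ k) := by
  intro k hk1
  induction k, hk1 using Nat.le_induction with
  | base =>
    intro hk1 l hl
    have hl1 : l = [1] := List.perm_singleton.mp (by simpa [List.range_succ] using hl)
    subst hl1
    have hne : (⟨0, by omega⟩ : Fin n) ≠ ⟨1, by omega⟩ := by simp [Fin.ext_iff]
    have hadj : adjSwap n 1 = Equiv.swap (⟨0, by omega⟩ : Fin n) ⟨1, by omega⟩ := by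
      rw [adjSwap, dif_pos ⟨le_refl 1, by omega⟩]
    simp only [List.map_cons, List.map_nil, List.prod_cons, List.prod_nil, mul_one, hadj]
    refine ⟨Equiv.Perm.isCycle_swap hne, ?_⟩
    rw [Equiv.Perm.support_swap hne]
    ext x
    simp [Fin.ext_iff]
    omega
  | succ k hk ih =>
    intro hk1 l hl
    have hmem : k + 1 ∈ l := hl.mem_iff.mpr (by
      simp only [List.mem_map, List.mem_range]
      exact ⟨k, by omega, rfl⟩)
    obtain ⟨u, v, rfl⟩ := List.append_of_mem hmem
    have huv : (v ++ u).Perm ((List.range k).map (· + 1)) := by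
      have h1 : (u ++ (k+1) :: v).Perm ((k+1) :: (u ++ v)) := List.perm_middle
      have h2 : ((List.range (k+1)).map (· + 1)).Perm ((k+1) :: (List.range k).map (· + 1)) := by
        rw [List.range_succ, List.map_append]
        simpa using List.perm_append_singleton _ _
      have h3 : ((k+1) :: (u ++ v)).Perm ((k+1) :: (List.range k).map (· + 1)) :=
        (h1.symm.trans hl).trans h2
      exact (List.perm_append_comm.trans ((List.perm_cons _).mp h3))
    have hbounds : ∀ i ∈ v ++ u, 1 ≤ i ∧ i ≤ k := by
      intro i hi
      have := huv.mem_iff.mp hi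
      simp only [List.mem_map, List.mem_range] at this
      omega
    obtain ⟨hτc, hτs⟩ := ih (by omega) (v ++ u) huv
    set τ : Equiv.Perm (Fin n) := ((v ++ u).map (adjSwap n)).prod with hτdef
    set U : Equiv.Perm (Fin n) := (u.map (adjSwap n)).prod with hUdef
    set V : Equiv.Perm (Fin n) := (v.map (adjSwap n)).prod with hVdef
    have hτVU : τ = V * U := by
      rw [hτdef, List.map_append, List.prod_append]
    set a : Fin n := ⟨k, by omega⟩
    set b : Fin n := ⟨k + 1, by omega⟩
    have ha : a ∈ τ.support := by rw [hτs]; simp [a]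
    have hb : b ∉ τ.support := by rw [hτs]; simp [b]
    obtain ⟨hc, hsupp⟩ := swap_mul_cycle_insert hτc ha hb
    have hs : adjSwap n (k+1) = Equiv.swap a b := by
      rw [adjSwap, dif_pos ⟨by omega, by omega⟩]
      congr 1
    have key : (((u ++ (k+1) :: v)).map (adjSwap n)).prod = U * (Equiv.swap a b * τ) * U⁻¹ := by
      simp only [List.map_append, List.map_cons, List.prod_append, List.prod_cons, hs, hτVU]
      group
      rfl
    have hUsupp : U.support ⊆ Finset.univ.filter (fun x : Fin n => (x : ℕ) ≤ k + 1) := by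
      refine subset_trans (prod_support_le n k u (fun i hi => hbounds i (by simp [hi])) (by omega)) ?_
      intro x hx
      simp at hx ⊢
      omega
    constructor
    · rw [key]; exact hc.conj
    · rw [key, Equiv.Perm.support_conj, hsupp]
      have h1 : insert b (Finset.univ.filter (fun x : Fin n => (x : ℕ) ≤ k))
          = Finset.univ.filter (fun x : Fin n => (x : ℕ) ≤ k + 1) := by
        ext x
        simp [Fin.ext_iff, b]
        omega
      rw [hτs, h1]
      exact map_support_subset U _ hUsupp

/-- For `n ≥ 2` and any permutation `(i_1, …, i_{n-1})` of `(1, …, n-1)`,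
the product of adjacent transpositions `(i_1, i_1+1) (i_2, i_2+1) ⋯ (i_{n-1}, i_{n-1}+1)`
in `S_n` is a cycle of length `n`: it is a cycle whose support is all of `{1, …, n}`. -/
theorem product_of_adjacent_transpositions_is_n_cycle (n : ℕ) (hn : 2 ≤ n) (l : List ℕ)
    (hperm : l.Perm ((List.range (n - 1)).map (· + 1))) :
    ((l.map (adjSwap n)).prod).IsCycle ∧
      ((l.map (adjSwap n)).prod).support = Finset.univ := by
  obtain ⟨h1, h2⟩ := main_aux n hn (n - 1) (by omega) (by omega) l hperm
  refine ⟨h1, ?_⟩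
  rw [h2]
  ext x
  simp
  omega
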